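/- Let q ≥ 3 and n ≥ 3. For s = (s_a)_{a∈[0,q−2]} ∈ Z_4^{q−1}, t = (t_1,t_2) ∈ Z_n × Z_2 and d = (d_1,d_2) ∈ Z_{qn} × Z_{2n−3}, define C(n;s,t,d) = {x ∈ Σ_q^n : N_a(x) ≡ s_a (mod 4) for all a ∈ [0,q−2]; Syn(α(x)) ≡ t_1 (mod n); Inv(x) ≡ t_2 (mod 2); Syn(x) ≡ d_1 (mod qn); Syn(P(x)) ≡ d_2 (mod 2n−3)}. Then C(n;s,t,d) is a single-absorption correcting code: for any two distinct codewords x, x′ ∈ C(n;s,t,d), the 1-absorption balls B_1^{ab}(x) and B_1^{ab}(x′) are disjoint. -/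
import Mathlib


/-- `a ⊕ b = min(a+b, q-1)` over the alphabet `Σ_q = {0,…,q-1}`. -/
def vplus (q a b : ℕ) : ℕ := min (a + b) (q - 1)

/-- `y` is obtained from `x` by a single absorption. -/
def absorb1 (q : ℕ) (x y : List ℕ) : Prop :=
  (∃ u v a b, x = u ++ a :: b :: v ∧ y = u ++ vplus q a b :: v) ∨ y = x.dropLast

/-- The `1`-absorption ball `B_1^{ab}(x)`. -/
def ball1 (q : ℕ) (x : List ℕ) : Set (List ℕ) := {y | absorb1 q x y}

/-- The VT syndrome `Syn(z) = Σ_{i=1}^{|z|} i·z_i` (positions are 1-indexed). -/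
def syn (z : List ℕ) : ℕ := ∑ i ∈ Finset.range z.length, (i + 1) * z.getD i 0

/-- `α(x) ∈ Σ_2^{n-1}`: `α(x)_i = 1` iff `x_{i+1} ≥ x_i`. -/
def alphaSeq (x : List ℕ) : List ℕ :=
  (List.range (x.length - 1)).map (fun i => if x.getD i 0 ≤ x.getD (i + 1) 0 then 1 else 0)

/-- `Inv(x) = |{(i,j) : i < j, x_i > x_j}|`. -/
def invCount (x : List ℕ) : ℕ :=
  ((Finset.range x.length ×ˢ Finset.range x.length).filter
    (fun p => p.1 < p.2 ∧ x.getD p.2 0 < x.getD p.1 0)).card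

/-- The location sequence `P(x) ∈ Σ_2^n`: `P(x)_i = 1` iff `x_i = q-1`. -/
def pseq (q : ℕ) (x : List ℕ) : List ℕ := x.map (fun a => if a = q - 1 then 1 else 0)

/-- Membership in the code `C(n;s,t,d)` of Theorem 1. -/
def memCodeC (q n : ℕ) (s : ℕ → ℕ) (t1 t2 d1 d2 : ℕ) (x : List ℕ) : Prop :=
  x.length = n ∧ (∀ a ∈ x, a < q) ∧
  (∀ a, a ≤ q - 2 → x.count a ≡ s a [MOD 4]) ∧
  syn (alphaSeq x) ≡ t1 [MOD n] ∧
  invCount x ≡ t2 [MOD 2] ∧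
  syn x ≡ d1 [MOD q * n] ∧
  syn (pseq q x) ≡ d2 [MOD 2 * n - 3]

namespace Stmt6Aux

lemma sum_getD (w : List ℕ) : ∑ i ∈ Finset.range w.length, w.getD i 0 = w.sum := by
  induction w with
  | nil => simp
  | cons a t ih =>
      rw [List.length_cons, Finset.sum_range_succ']
      simp only [List.getD_cons_succ, List.getD_cons_zero]
      rw [ih, List.sum_cons, add_comm]

lemma syn_nil : syn [] = 0 := rfl

lemma syn_cons (c : ℕ) (w : List ℕ) : syn (c :: w) = c + w.sum + syn w := by
  unfold syn
  rw [List.length_cons, Finset.sum_range_succ']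
  simp only [List.getD_cons_succ, List.getD_cons_zero, one_mul, zero_add]
  have h : ∀ i ∈ Finset.range w.length, (i + 1 + 1) * w.getD i 0
      = (i+1) * w.getD i 0 + w.getD i 0 := by intro i _; ring
  rw [Finset.sum_congr rfl h, Finset.sum_add_distrib, sum_getD]
  ring

lemma syn_append (u w : List ℕ) : syn (u ++ w) = syn u + u.length * w.sum + syn w := by
  induction u with
  | nil => simp [syn_nil]
  | cons c t ih =>
      simp only [List.cons_append, syn_cons, ih, List.sum_append, List.length_cons]
      ring

def bbit (a b : ℕ) : ℕ := if a ≤ b then 1 else 0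

lemma bbit_le_one (a b : ℕ) : bbit a b ≤ 1 := by unfold bbit; split <;> omega

lemma bbit_cases (a b : ℕ) : (bbit a b = 1 ∧ a ≤ b) ∨ (bbit a b = 0 ∧ b < a) := by
  unfold bbit; split
  · left; omega
  · right; omega

lemma length_alphaSeq (x : List ℕ) : (alphaSeq x).length = x.length - 1 := by simp [alphaSeq]

lemma alphaSeq_getD {x : List ℕ} {k : ℕ} (h : k < x.length - 1) :
    (alphaSeq x).getD k 0 = bbit (x.getD k 0) (x.getD (k+1) 0) := by
  unfold alphaSeq bbit
  rw [List.getD_eq_getElem _ _ (by simpa using h)]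
  simp

lemma alphaSeq_cons (a h : ℕ) (t : List ℕ) :
    alphaSeq (a :: h :: t) = bbit a h :: alphaSeq (h :: t) := by
  unfold alphaSeq bbit
  simp only [List.length_cons, Nat.add_sub_cancel]
  rw [List.range_succ_eq_map]
  simp [List.map_map, Function.comp, List.getD_cons_succ, List.getD_cons_zero]

lemma alphaSeq_le_one {x : List ℕ} : ∀ a ∈ alphaSeq x, a ≤ 1 := by
  intro a ha
  unfold alphaSeq at ha
  rw [List.mem_map] at ha
  obtain ⟨i, _, hi⟩ := ha
  rw [← hi]; split <;> omega

lemma alphaSeq_singleton (a : ℕ) : alphaSeq [a] = [] := by simp [alphaSeq]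

def ins (z : List ℕ) (p c : ℕ) : List ℕ := z.take p ++ c :: z.drop p

@[simp] lemma ins_zero (z : List ℕ) (c : ℕ) : ins z 0 c = c :: z := by simp [ins]

@[simp] lemma ins_cons (h : ℕ) (z : List ℕ) (p c : ℕ) :
    ins (h :: z) (p+1) c = h :: ins z p c := by simp [ins]

lemma ins_ne_nil (z : List ℕ) (p c : ℕ) : ins z p c ≠ [] := by simp [ins]

lemma length_ins (z : List ℕ) (p c : ℕ) (h : p ≤ z.length) :
    (ins z p c).length = z.length + 1 := by
  simp [ins]; omega

lemma ins_getD_lt {z : List ℕ} {p c j : ℕ} (hp : p ≤ z.length) (h : j < p) :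
    (ins z p c).getD j 0 = z.getD j 0 := by
  unfold ins
  rw [List.getD_append _ _ _ _ (by rw [List.length_take]; omega)]
  rcases lt_or_ge j z.length with hj | hj
  · rw [List.getD_eq_getElem _ _ (by rw [List.length_take]; omega),
      List.getD_eq_getElem _ _ hj, List.getElem_take]
  · omega

lemma ins_getD_self {z : List ℕ} {p c : ℕ} (hp : p ≤ z.length) :
    (ins z p c).getD p 0 = c := by
  unfold ins
  rw [List.getD_append_right _ _ _ _ (by rw [List.length_take]; omega)]
  rw [List.length_take, Nat.min_eq_left hp, Nat.sub_self, List.getD_cons_zero]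

lemma ins_getD_gt {z : List ℕ} {p c j : ℕ} (hp : p ≤ z.length) (h : p < j) :
    (ins z p c).getD j 0 = z.getD (j-1) 0 := by
  unfold ins
  rw [List.getD_append_right _ _ _ _ (by rw [List.length_take]; omega)]
  rw [List.length_take, Nat.min_eq_left hp]
  rw [show j - p = (j - p - 1) + 1 by omega, List.getD_cons_succ]
  rcases lt_or_ge (j-1) z.length with hlt | hge
  · rw [List.getD_eq_getElem _ _ (by rw [List.length_drop]; omega),
        List.getD_eq_getElem _ _ hlt]
    rw [List.getElem_drop]
    congr 1
    omega
  · rw [List.getD_eq_default _ _ (by rw [List.length_drop]; omega),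
        List.getD_eq_default _ _ hge]

lemma sum_le_of_le_one {w : List ℕ} (h : ∀ a ∈ w, a ≤ 1) : w.sum ≤ w.length := by
  induction w with
  | nil => simp
  | cons a t ih =>
      simp only [List.sum_cons, List.length_cons]
      have h1 := h a (by simp)
      have h2 := ih (fun b hb => h b (by simp [hb]))
      omega

lemma all_eq_one_of_sum {w : List ℕ} (h : ∀ a ∈ w, a ≤ 1) (hs : w.length ≤ w.sum) :
    ∀ a ∈ w, a = 1 := by
  induction w with
  | nil => simp
  | cons a t ih =>
      have h1 := h a (by simp)
      have h2 : ∀ b ∈ t, b ≤ 1 := fun b hb => h b (by simp [hb])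
      have h3 := sum_le_of_le_one h2
      simp only [List.sum_cons, List.length_cons] at hs
      intro b hb
      rcases List.mem_cons.mp hb with rfl | hb'
      · omega
      · exact ih h2 (by omega) b hb'

lemma ins_step {z : List ℕ} {p c : ℕ} (hp : p < z.length) (hc : z.getD p 0 = c) :
    ins z p c = ins z (p+1) c := by
  unfold ins
  rw [List.take_succ, List.drop_eq_getElem_cons hp]
  rw [List.getD_eq_getElem _ _ hp] at hc
  rw [List.getElem?_eq_getElem hp]
  simp [hc]

lemma ins_run {z : List ℕ} {c p p' : ℕ} (hpp : p ≤ p') (hp' : p' ≤ z.length)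
    (hall : ∀ a ∈ (z.drop p).take (p' - p), a = c) : ins z p c = ins z p' c := by
  induction p', hpp using Nat.le_induction with
  | base => rfl
  | succ m hm ih =>
      have hz : m < z.length := by omega
      have h1 : m - p < ((z.drop p).take (m+1-p)).length := by
        simp [List.length_take, List.length_drop]; omega
      have h2 : ((z.drop p).take (m+1-p))[m-p]'h1 = z[m]'hz := by
        rw [List.getElem_take, List.getElem_drop]
        congr 1
        omega
      have hmem : z.getD m 0 = c := by
        rw [List.getD_eq_getElem _ _ hz]
        exact hall _ (h2 ▸ List.getElem_mem h1)
      have hsub : ∀ a ∈ (z.drop p).take (m - p), a = c := by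
        intro a ha
        apply hall
        have : (z.drop p).take (m - p) = ((z.drop p).take (m+1-p)).take (m-p) := by
          rw [List.take_take, Nat.min_eq_left (by omega)]
        rw [this] at ha
        exact List.take_subset _ _ ha
      rw [ih (by omega) hsub, ins_step hz hmem]

lemma syn_ins (z : List ℕ) (p c : ℕ) (hp : p ≤ z.length) :
    syn (ins z p c) = syn z + ((p+1) * c + (z.drop p).sum) := by
  have hz : syn z = syn (z.take p) + p * (z.drop p).sum + syn (z.drop p) := by
    conv_lhs => rw [← List.take_append_drop p z]
    rw [syn_append, List.length_take, Nat.min_eq_left hp]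
  unfold ins
  rw [syn_append, syn_cons, List.length_take, Nat.min_eq_left hp, hz, List.sum_cons]
  ring

lemma modeq_eq_of_lt {m a b : ℕ} (h : a ≡ b [MOD m]) (ha : a < m) (hb : b < m) : a = b := by
  have h' : a % m = b % m := h
  rwa [Nat.mod_eq_of_lt ha, Nat.mod_eq_of_lt hb] at h'

lemma vt_aux {z : List ℕ} (hz : ∀ a ∈ z, a ≤ 1) {c c' p p' : ℕ} (hc : c ≤ 1) (hc' : c' ≤ 1)
    (hp : p ≤ z.length) (hp' : p' ≤ z.length) (hpp : p ≤ p')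
    (hD : (p+1) * c + (z.drop p).sum = (p'+1) * c' + (z.drop p').sum) :
    ins z p c = ins z p' c' := by
  have hsplit : z.drop p = (z.drop p).take (p' - p) ++ z.drop p' := by
    rw [show z.drop p' = (z.drop p).drop (p'-p) by
          rw [List.drop_drop]; congr 1; omega,
        List.take_append_drop]
  have hsum : (z.drop p).sum = ((z.drop p).take (p'-p)).sum + (z.drop p').sum := by
    conv_lhs => rw [hsplit]
    rw [List.sum_append]
  have hseg : ∀ a ∈ (z.drop p).take (p'-p), a ≤ 1 :=
    fun a ha => hz a (List.drop_subset _ _ (List.take_subset _ _ ha))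
  have hT : ((z.drop p).take (p'-p)).sum ≤ p' - p := by
    have h1 := sum_le_of_le_one hseg
    have h2 : ((z.drop p).take (p'-p)).length ≤ p' - p := by
      simp [List.length_take]
    omega
  have hlenseg : ((z.drop p).take (p'-p)).length = p' - p := by
    simp [List.length_take, List.length_drop]; omega
  interval_cases c <;> interval_cases c'
  · -- c = 0, c' = 0
    have hT0 : ((z.drop p).take (p'-p)).sum = 0 := by omega
    refine ins_run hpp hp' (fun a ha => ?_)
    have := List.sum_eq_zero_iff.mp hT0 a ha
    exact this
  · -- c = 0, c' = 1 : impossible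
    exfalso; omega
  · -- c = 1, c' = 0 : impossible
    exfalso; omega
  · -- c = 1, c' = 1
    have hT1 : ((z.drop p).take (p'-p)).sum = p' - p := by omega
    refine ins_run hpp hp' (fun a ha => ?_)
    exact all_eq_one_of_sum hseg (by omega) a ha

lemma vt {z : List ℕ} (hz : ∀ a ∈ z, a ≤ 1) {c c' p p' : ℕ} (hc : c ≤ 1) (hc' : c' ≤ 1)
    (hp : p ≤ z.length) (hp' : p' ≤ z.length)
    (hsyn : syn (ins z p c) ≡ syn (ins z p' c') [MOD z.length + 2]) :
    ins z p c = ins z p' c' := by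
  rw [syn_ins _ _ _ hp, syn_ins _ _ _ hp'] at hsyn
  have h1 : (p+1)*c + (z.drop p).sum ≡ (p'+1)*c' + (z.drop p').sum [MOD z.length+2] :=
    Nat.ModEq.add_left_cancel' _ hsyn
  have hb : ∀ (r : ℕ), r ≤ z.length → ∀ e, e ≤ 1 → (r+1)*e + (z.drop r).sum ≤ z.length + 1 := by
    intro r hr e he
    have h2 := sum_le_of_le_one (w := z.drop r) (fun a ha => hz a (List.drop_subset _ _ ha))
    rw [List.length_drop] at h2
    have h3 : (r+1)*e ≤ (r+1)*1 := Nat.mul_le_mul_left _ he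
    omega
  have hEq : (p+1)*c + (z.drop p).sum = (p'+1)*c' + (z.drop p').sum :=
    modeq_eq_of_lt h1 (by have := hb p hp c hc; omega) (by have := hb p' hp' c' hc'; omega)
  rcases le_total p p' with h | h
  · exact vt_aux hz hc hc' hp hp' h hEq
  · exact (vt_aux hz hc' hc hp' hp h hEq.symm).symm

lemma alpha_ins : ∀ (z : List ℕ) (p c : ℕ), p ≤ z.length → z ≠ [] →
    ∃ r e, r ≤ z.length - 1 ∧ e ≤ 1 ∧ alphaSeq (ins z p c) = ins (alphaSeq z) r e := by
  intro z
  induction z with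
  | nil => intro p c _ hne; exact absurd rfl hne
  | cons h t ih =>
    intro p c hp _
    rcases p with _ | p0
    · -- insert at front
      rcases t with _ | ⟨h2, t2⟩
      · exact ⟨0, bbit c h, by simp, bbit_le_one _ _, by
          rw [ins_zero, alphaSeq_cons, alphaSeq_singleton, ins_zero]⟩
      · exact ⟨0, bbit c h, by simp, bbit_le_one _ _, by
          rw [ins_zero, alphaSeq_cons, ins_zero]⟩
    · rcases t with _ | ⟨h2, t2⟩
      · -- z = [h], p = 1
        have hp0 : p0 = 0 := by simpa using hp
        subst hp0
        refine ⟨0, bbit h c, by simp, bbit_le_one _ _, ?_⟩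
        rw [ins_cons, ins_zero, alphaSeq_cons, alphaSeq_singleton, alphaSeq_singleton, ins_zero]
      · rcases p0 with _ | p1
        · -- p = 1, two-bit case
          have e1 : ins (h :: h2 :: t2) 1 c = h :: c :: h2 :: t2 := by
            rw [ins_cons, ins_zero]
          have e2 : alphaSeq (h :: h2 :: t2) = bbit h h2 :: alphaSeq (h2 :: t2) :=
            alphaSeq_cons _ _ _
          by_cases hbb : bbit h c = bbit h h2
          · refine ⟨1, bbit c h2, by simp, bbit_le_one _ _, ?_⟩
            rw [e1, alphaSeq_cons, alphaSeq_cons, e2]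
            have e3 : ins (bbit h h2 :: alphaSeq (h2 :: t2)) 1 (bbit c h2)
                = bbit h h2 :: bbit c h2 :: alphaSeq (h2 :: t2) := by
              rw [show (1:ℕ) = 0 + 1 from rfl, ins_cons, ins_zero]
            rw [e3, hbb]
          · have hkey : bbit c h2 = bbit h h2 := by
              unfold bbit at *
              split_ifs at * <;> omega
            refine ⟨0, bbit h c, by simp, bbit_le_one _ _, ?_⟩
            rw [e1, alphaSeq_cons, alphaSeq_cons, e2, ins_zero, hkey]
        · -- p = p1 + 2, recursive case
          have hp' : p1 + 1 ≤ (h2 :: t2).length := by simpa using hp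
          obtain ⟨r, e, hr, he, hae⟩ := ih (p1+1) c hp' (by simp)
          have e0 : ins (h2 :: t2) (p1+1) c = h2 :: ins t2 p1 c := ins_cons _ _ _ _
          refine ⟨r+1, e, ?_, he, ?_⟩
          · simp only [List.length_cons] at hr ⊢
            omega
          · rw [ins_cons]
            rw [e0] at hae ⊢
            rw [alphaSeq_cons h h2 (ins t2 p1 c), hae, alphaSeq_cons, ← ins_cons]

lemma chain_le (f : ℕ → ℕ) (a b : ℕ) (h : ∀ j, a ≤ j → j < b → f j ≤ f (j+1)) :
    ∀ i j, a ≤ i → i ≤ j → j ≤ b → f i ≤ f j := by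
  intro i j hai hij
  induction j, hij using Nat.le_induction with
  | base => intro _; exact le_refl _
  | succ m hm ihm =>
      intro hmb
      exact le_trans (ihm (by omega)) (h m (by omega) (by omega))

lemma chain_ge (f : ℕ → ℕ) (a b : ℕ) (h : ∀ j, a ≤ j → j < b → f (j+1) ≤ f j) :
    ∀ i j, a ≤ i → i ≤ j → j ≤ b → f j ≤ f i := by
  intro i j hai hij
  induction j, hij using Nat.le_induction with
  | base => intro _; exact le_refl _
  | succ m hm ihm =>
      intro hmb
      exact le_trans (h m (by omega) (by omega)) (ihm (by omega))

lemma chain_core (f : ℕ → ℕ) (d L : ℕ) (hL : 1 ≤ L) (h0 : f 0 = d)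
    (hstep : ∀ i, i + 1 ≤ L - 1 → bbit (f i) (f (i+1)) = bbit (f (i+1)) (f (i+2)))
    (hlast : bbit (f (L-1)) (f L) = bbit (f L) d) :
    ∀ i, 1 ≤ i → i ≤ L → f i = d := by
  have hbits : ∀ i, i ≤ L - 1 → bbit (f i) (f (i+1)) = bbit (f 0) (f 1) := by
    intro i hi
    induction i with
    | zero => rfl
    | succ m ihm =>
        rw [← hstep m (by omega)]
        exact ihm (by omega)
  have hlast' : bbit (f L) d = bbit (f 0) (f 1) := by
    rw [← hlast]
    have := hbits (L-1) (by omega)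
    rwa [show L - 1 + 1 = L by omega] at this
  rcases bbit_cases (f 0) (f 1) with ⟨hc, _⟩ | ⟨hc, hgt⟩
  · -- increasing case
    have hmono : ∀ j, 0 ≤ j → j < L → f j ≤ f (j+1) := by
      intro j _ hj
      have hb := hbits j (by omega)
      rw [hc] at hb
      rcases bbit_cases (f j) (f (j+1)) with ⟨_, hle⟩ | ⟨h0', _⟩
      · exact hle
      · omega
    have hLd : f L ≤ d := by
      have hb := hlast'
      rw [hc] at hb
      rcases bbit_cases (f L) d with ⟨_, hle⟩ | ⟨h0', _⟩
      · exact hle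
      · omega
    intro i h1i hiL
    have hup : f 0 ≤ f i := chain_le f 0 L hmono 0 i (by omega) (by omega) (by omega)
    have hdown : f i ≤ f L := chain_le f 0 L hmono i L (by omega) (by omega) (by omega)
    omega
  · -- decreasing case: contradiction
    have hmono : ∀ j, 0 ≤ j → j < L → f (j+1) ≤ f j := by
      intro j _ hj
      have hb := hbits j (by omega)
      rw [hc] at hb
      rcases bbit_cases (f j) (f (j+1)) with ⟨h1', _⟩ | ⟨_, hlt⟩
      · omega
      · omega
    have hdL : d < f L := by
      have hb := hlast'
      rw [hc] at hb
      rcases bbit_cases (f L) d with ⟨h1', _⟩ | ⟨_, hlt⟩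
      · omega
      · exact hlt
    have h1L : f L ≤ f 1 := chain_ge f 0 L hmono 1 L (by omega) (by omega) (by omega)
    intro i h1i hiL
    exfalso
    omega

lemma chain_main {y : List ℕ} {d p p' : ℕ} (hpp : p < p') (hp' : p' ≤ y.length)
    (hα : alphaSeq (ins y p d) = alphaSeq (ins y p' d)) :
    ∀ a ∈ (y.drop p).take (p' - p), a = d := by
  have hp : p ≤ y.length := by omega
  set L := p' - p with hLdef
  have hL : 1 ≤ L := by omega
  set f : ℕ → ℕ := fun i => (ins y p d).getD (p+i) 0 with hf
  have hlen : (ins y p d).length = y.length + 1 := length_ins _ _ _ hp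
  have hlen' : (ins y p' d).length = y.length + 1 := length_ins _ _ _ hp'
  have hf0 : f 0 = d := by
    simp only [hf, Nat.add_zero]
    exact ins_getD_self hp
  have hfi : ∀ i, 1 ≤ i → i ≤ L → f i = y.getD (p+i-1) 0 := by
    intro i h1 h2
    simp only [hf]
    exact ins_getD_gt hp (by omega)
  have hax : ∀ k, k < y.length → (alphaSeq (ins y p d)).getD k 0
      = bbit ((ins y p d).getD k 0) ((ins y p d).getD (k+1) 0) :=
    fun k hk => alphaSeq_getD (by omega)
  have hax' : ∀ k, k < y.length → (alphaSeq (ins y p' d)).getD k 0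
      = bbit ((ins y p' d).getD k 0) ((ins y p' d).getD (k+1) 0) :=
    fun k hk => alphaSeq_getD (by omega)
  have hstep : ∀ i, i + 1 ≤ L - 1 → bbit (f i) (f (i+1)) = bbit (f (i+1)) (f (i+2)) := by
    intro i hi
    have hk : p + i < y.length := by omega
    have e1 : (alphaSeq (ins y p d)).getD (p+i) 0 = bbit (f i) (f (i+1)) := by
      rw [hax _ hk]
      rfl
    have e2 : (alphaSeq (ins y p' d)).getD (p+i) 0 = bbit (f (i+1)) (f (i+2)) := by
      rw [hax' _ hk]
      rw [ins_getD_lt hp' (by omega), ins_getD_lt hp' (by omega)]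
      rw [hfi (i+1) (by omega) (by omega), hfi (i+2) (by omega) (by omega)]
      congr 2
    rw [← e1, hα, e2]
  have hlast : bbit (f (L-1)) (f L) = bbit (f L) d := by
    have hk : p + (L-1) < y.length := by omega
    have e1 : (alphaSeq (ins y p d)).getD (p+(L-1)) 0 = bbit (f (L-1)) (f L) := by
      rw [hax _ hk, show p + (L-1) + 1 = p + L by omega]
    have e2 : (alphaSeq (ins y p' d)).getD (p+(L-1)) 0 = bbit (f L) d := by
      rw [hax' _ hk]
      rw [ins_getD_lt hp' (by omega)]
      rw [show p + (L-1) + 1 = p' by omega, ins_getD_self hp']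
      congr 1
      rw [hfi L (by omega) (by omega)]
      congr 1
      omega
    rw [← e1, hα, e2]
  have hcore := chain_core f d L hL hf0 hstep hlast
  intro a ha
  obtain ⟨i, hilen, hia⟩ := List.getElem_of_mem ha
  have hi2 : i < L := by
    simp only [List.length_take, List.length_drop] at hilen
    omega
  have hyi : a = y.getD (p+i) 0 := by
    rw [← hia, List.getElem_take, List.getElem_drop]
    rw [List.getD_eq_getElem _ _ (by omega)]
  have := hcore (i+1) (by omega) (by omega)
  rw [hfi (i+1) (by omega) (by omega)] at this
  rw [hyi, show p + i = p + (i+1) - 1 by omega]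
  exact this

lemma caseDD_core {y : List ℕ} {d p p' n : ℕ} (hn : 3 ≤ n) (hylen : y.length = n - 1)
    (hp : p ≤ y.length) (hp' : p' ≤ y.length)
    (hsyn : syn (alphaSeq (ins y p d)) ≡ syn (alphaSeq (ins y p' d)) [MOD n]) :
    ins y p d = ins y p' d := by
  have hyne : y ≠ [] := by
    intro h
    rw [h] at hylen
    simp at hylen
    omega
  obtain ⟨r, e, hr, he, hαx⟩ := alpha_ins y p d hp hyne
  obtain ⟨r', e', hr', he', hαx'⟩ := alpha_ins y p' d hp' hyne
  have hlen : (alphaSeq y).length = y.length - 1 := length_alphaSeq y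
  have hmod : (alphaSeq y).length + 2 = n := by omega
  have hvt : ins (alphaSeq y) r e = ins (alphaSeq y) r' e' := by
    refine vt alphaSeq_le_one he he' (by omega) (by omega) ?_
    rw [hmod, ← hαx, ← hαx']
    exact hsyn
  have hαeq : alphaSeq (ins y p d) = alphaSeq (ins y p' d) := by
    rw [hαx, hαx', hvt]
  rcases lt_trichotomy p p' with h | h | h
  · exact ins_run (le_of_lt h) hp' (chain_main h hp' hαeq)
  · rw [h]
  · exact (ins_run (le_of_lt h) hp (chain_main h hp hαeq.symm)).symm

lemma cnt_del (u : List ℕ) (d : ℕ) (v : List ℕ) (c : ℕ) :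
    (u ++ d :: v).count c = (u ++ v).count c + (if d = c then 1 else 0) := by
  simp [List.count_append, List.count_cons]
  split_ifs <;> omega

lemma cnt_merge (u : List ℕ) (a b m : ℕ) (v : List ℕ) (c : ℕ) :
    (u ++ a :: b :: v).count c + (if m = c then 1 else 0)
      = (u ++ m :: v).count c + ((if a = c then 1 else 0) + (if b = c then 1 else 0)) := by
  simp [List.count_append, List.count_cons]
  split_ifs <;> omega

lemma syn_merge (u : List ℕ) (a b m : ℕ) (v : List ℕ) :
    syn (u ++ a :: b :: v) + (u.length + 1) * m
      = syn (u ++ m :: v) + ((u.length + 1) * (a + b) + b + v.sum) := by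
  simp only [syn_append, syn_cons, List.sum_cons]
  ring

lemma pseq_cons (q a : ℕ) (w : List ℕ) :
    pseq q (a :: w) = (if a = q-1 then 1 else 0) :: pseq q w := by simp [pseq]

lemma pseq_append (q : ℕ) (u w : List ℕ) : pseq q (u ++ w) = pseq q u ++ pseq q w := by
  simp [pseq]

lemma pseq_length (q : ℕ) (w : List ℕ) : (pseq q w).length = w.length := by simp [pseq]

lemma pseq_sum_le (q : ℕ) (w : List ℕ) : (pseq q w).sum ≤ w.length := by
  induction w with
  | nil => simp [pseq]
  | cons a t ih =>
      rw [pseq_cons, List.sum_cons, List.length_cons]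
      split <;> omega

lemma pseq_merge {q : ℕ} (hq : 3 ≤ q) (u v : List ℕ) {a b : ℕ} (ha : a ≤ q-2) (hb : b ≤ q-2) :
    syn (pseq q (u ++ a :: b :: v)) + (u.length + 1)
      = syn (pseq q (u ++ (q-1) :: v)) + (pseq q v).sum := by
  have ha' : ¬(a = q-1) := by omega
  have hb' : ¬(b = q-1) := by omega
  simp only [pseq_append, pseq_cons, syn_append, syn_cons, List.sum_cons, pseq_length,
    if_neg ha', if_neg hb', if_pos rfl, if_true]
  ring

lemma drop_append_cons (u : List ℕ) (c : ℕ) (v : List ℕ) :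
    (u ++ c :: v).drop (u.length + 1) = v := by
  rw [show u ++ c :: v = (u ++ [c]) ++ v by simp,
      show u.length + 1 = (u ++ [c]).length by simp, List.drop_left]

lemma caseDD {q n : ℕ} {x x' y u v u' v' : List ℕ} {d d' : ℕ}
    (hq : 3 ≤ q) (hn : 3 ≤ n)
    (hlx : x.length = n)
    (hxq : ∀ e ∈ x, e < q) (hx'q : ∀ e ∈ x', e < q)
    (hsynα : syn (alphaSeq x) ≡ syn (alphaSeq x') [MOD n])
    (hcnt : ∀ c, c ≤ q - 2 → x.count c ≡ x'.count c [MOD 4])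
    (hxe : x = u ++ d :: v) (hye : y = u ++ v)
    (hxe' : x' = u' ++ d' :: v') (hye' : y = u' ++ v') : x = x' := by
  have hdq : d < q := hxq d (by rw [hxe]; exact List.mem_append_right _ (by simp))
  have hd'q : d' < q := hx'q d' (by rw [hxe']; exact List.mem_append_right _ (by simp))
  -- d = d' via counts
  have key : ∀ c, c ≤ q - 2 → ((if d = c then 1 else 0 : ℕ) = (if d' = c then 1 else 0)) := by
    intro c hc
    have k1 : x.count c = y.count c + (if d = c then 1 else 0) := by
      rw [hxe, hye]; exact cnt_del u d v c
    have k2 : x'.count c = y.count c + (if d' = c then 1 else 0) := by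
      rw [hxe', hye']; exact cnt_del u' d' v' c
    have k3 : x.count c % 4 = x'.count c % 4 := hcnt c hc
    split_ifs at k1 k2 ⊢ <;> omega
  have hdd : d = d' := by
    by_cases hd2 : d ≤ q - 2
    · have h1 := key d hd2
      split_ifs at h1 <;> omega
    · by_cases hd'2 : d' ≤ q - 2
      · have h1 := key d' hd'2
        split_ifs at h1 <;> omega
      · omega
  subst hdd
  have hx1 : x = ins y u.length d := by
    rw [hxe, hye]
    unfold ins
    rw [List.take_left, List.drop_left]
  have hx2 : x' = ins y u'.length d := by
    rw [hxe', hye']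
    unfold ins
    rw [List.take_left, List.drop_left]
  have hylen : y.length = n - 1 := by
    rw [hxe] at hlx
    rw [hye]
    simp only [List.length_append, List.length_cons] at hlx ⊢
    omega
  have hp : u.length ≤ y.length := by rw [hye]; simp
  have hp' : u'.length ≤ y.length := by rw [hye']; simp
  rw [hx1, hx2]
  refine caseDD_core hn hylen hp hp' ?_
  rw [← hx1, ← hx2]
  exact hsynα

lemma caseII_aux {q n : ℕ} {x x' y u v u' v' : List ℕ} {a b a' b' : ℕ}
    (hq : 3 ≤ q) (hn : 3 ≤ n)
    (hlx : x.length = n) (hlx' : x'.length = n)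
    (hxq : ∀ e ∈ x, e < q) (hx'q : ∀ e ∈ x', e < q)
    (hsyn : syn x ≡ syn x' [MOD q * n])
    (hxe : x = u ++ a :: b :: v) (hye : y = u ++ (a+b) :: v)
    (h1a : 1 ≤ a) (h1b : 1 ≤ b)
    (hxe' : x' = u' ++ a' :: b' :: v') (hye' : y = u' ++ (a'+b') :: v')
    (h1a' : 1 ≤ a') (h1b' : 1 ≤ b')
    (hle : u.length ≤ u'.length) : x = x' := by
  have hsx : syn x = syn y + (b + v.sum) := by
    have h0 := syn_merge u a b (a+b) v
    rw [← hxe, ← hye] at h0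
    generalize (u.length + 1) * (a+b) = K at h0
    omega
  have hsx' : syn x' = syn y + (b' + v'.sum) := by
    have h0 := syn_merge u' a' b' (a'+b') v'
    rw [← hxe', ← hye'] at h0
    generalize (u'.length + 1) * (a'+b') = K at h0
    omega
  have hbq : b < q := hxq b (by rw [hxe]; simp)
  have hb'q : b' < q := hx'q b' (by rw [hxe']; simp)
  have hvq : ∀ e ∈ v, e < q := fun e he => hxq e (by rw [hxe]; simp [he])
  have hv'q : ∀ e ∈ v', e < q := fun e he => hx'q e (by rw [hxe']; simp [he])
  have hvsum : v.sum ≤ v.length * (q-1) := by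
    have h0 := List.sum_le_card_nsmul v (q-1) (fun e he => by have := hvq e he; omega)
    simpa [smul_eq_mul, mul_comm] using h0
  have hv'sum : v'.sum ≤ v'.length * (q-1) := by
    have h0 := List.sum_le_card_nsmul v' (q-1) (fun e he => by have := hv'q e he; omega)
    simpa [smul_eq_mul, mul_comm] using h0
  have hlv : v.length + u.length + 2 = n := by
    rw [hxe] at hlx
    simp only [List.length_append, List.length_cons] at hlx
    omega
  have hlv' : v'.length + u'.length + 2 = n := by
    rw [hxe'] at hlx'
    simp only [List.length_append, List.length_cons] at hlx'
    omega
  have hBx : b + v.sum < q * n := by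
    have h2 : b + v.sum ≤ (v.length + 1) * (q-1) := by
      have : b ≤ q - 1 := by omega
      calc b + v.sum ≤ (q-1) + v.length * (q-1) := by omega
      _ = (v.length + 1) * (q-1) := by ring
    have h3 : (v.length + 1) * (q-1) < q * n := by
      rw [mul_comm q n]
      exact Nat.mul_lt_mul_of_lt_of_lt (by omega) (by omega)
    omega
  have hBx' : b' + v'.sum < q * n := by
    have h2 : b' + v'.sum ≤ (v'.length + 1) * (q-1) := by
      have : b' ≤ q - 1 := by omega
      calc b' + v'.sum ≤ (q-1) + v'.length * (q-1) := by omega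
      _ = (v'.length + 1) * (q-1) := by ring
    have h3 : (v'.length + 1) * (q-1) < q * n := by
      rw [mul_comm q n]
      exact Nat.mul_lt_mul_of_lt_of_lt (by omega) (by omega)
    omega
  have heqn : b + v.sum = b' + v'.sum := by
    have h1 : syn y + (b + v.sum) ≡ syn y + (b' + v'.sum) [MOD q*n] := by
      rw [← hsx, ← hsx']
      exact hsyn
    exact modeq_eq_of_lt (Nat.ModEq.add_left_cancel' _ h1) hBx hBx'
  rcases eq_or_lt_of_le hle with heq | hlt
  · obtain ⟨hu, hcons⟩ := List.append_inj (hye.symm.trans hye') heq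
    rw [List.cons_eq_cons] at hcons
    obtain ⟨hm, hv⟩ := hcons
    subst hv
    have hb : b = b' := by omega
    have ha : a = a' := by omega
    simp [hxe, hxe', hu, hb, ha]
  · exfalso
    have hyv : v = y.drop (u.length + 1) := by rw [hye, drop_append_cons]
    have hvd : v.drop (u'.length - u.length - 1) = (a'+b') :: v' := by
      rw [hyv, List.drop_drop]
      rw [show u.length + 1 + (u'.length - u.length - 1) = u'.length by omega]
      rw [hye', List.drop_left]
    have hsum : v.sum = (v.take (u'.length - u.length - 1)).sum + ((a'+b') + v'.sum) := by
      conv_lhs => rw [← List.take_append_drop (u'.length - u.length - 1) v]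
      rw [List.sum_append, hvd, List.sum_cons]
    omega

lemma caseII {q n : ℕ} {x x' y u v u' v' : List ℕ} {a b a' b' : ℕ}
    (hq : 3 ≤ q) (hn : 3 ≤ n)
    (hlx : x.length = n) (hlx' : x'.length = n)
    (hxq : ∀ e ∈ x, e < q) (hx'q : ∀ e ∈ x', e < q)
    (hsyn : syn x ≡ syn x' [MOD q * n])
    (hxe : x = u ++ a :: b :: v) (hye : y = u ++ (a+b) :: v)
    (h1a : 1 ≤ a) (h1b : 1 ≤ b)
    (hxe' : x' = u' ++ a' :: b' :: v') (hye' : y = u' ++ (a'+b') :: v')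
    (h1a' : 1 ≤ a') (h1b' : 1 ≤ b') : x = x' := by
  rcases le_total u.length u'.length with h | h
  · exact caseII_aux hq hn hlx hlx' hxq hx'q hsyn hxe hye h1a h1b hxe' hye' h1a' h1b' h
  · exact (caseII_aux hq hn hlx' hlx hx'q hxq hsyn.symm hxe' hye' h1a' h1b' hxe hye h1a h1b h).symm

lemma countSS {q : ℕ} (hq : 3 ≤ q) {x x' y : List ℕ} {u v u' v' : List ℕ} {a b a' b' : ℕ}
    (hcnt : ∀ c, c ≤ q-2 → x.count c ≡ x'.count c [MOD 4])
    (hxe : x = u ++ a :: b :: v) (hye : y = u ++ (q-1) :: v)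
    (hxe' : x' = u' ++ a' :: b' :: v') (hye' : y = u' ++ (q-1) :: v')
    (ha2 : a ≤ q-2) (hb2 : b ≤ q-2) (ha2' : a' ≤ q-2) (hb2' : b' ≤ q-2) :
    a + b = a' + b' := by
  have key : ∀ c, c ≤ q-2 → ((if a = c then 1 else 0) + (if b = c then 1 else 0) : ℕ)
      = (if a' = c then 1 else 0) + (if b' = c then 1 else 0) := by
    intro c hc
    have k1 := cnt_merge u a b (q-1) v c
    rw [← hxe, ← hye] at k1
    have k2 := cnt_merge u' a' b' (q-1) v' c
    rw [← hxe', ← hye'] at k2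
    have k3 : x.count c % 4 = x'.count c % 4 := hcnt c hc
    have hq1 : ¬(q-1 = c) := by omega
    rw [if_neg hq1] at k1 k2
    split_ifs at k1 k2 ⊢ <;> omega
  have ka := key a ha2
  have kb := key b hb2
  split_ifs at ka kb <;> omega

lemma caseSS_aux {q n : ℕ} {x x' y u v u' v' : List ℕ} {a b a' b' : ℕ}
    (hq : 3 ≤ q) (hn : 3 ≤ n)
    (hlx : x.length = n) (hlx' : x'.length = n)
    (hsyn : syn x ≡ syn x' [MOD q * n])
    (hsynP : syn (pseq q x) ≡ syn (pseq q x') [MOD 2 * n - 3])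
    (hab : a + b = a' + b')
    (hxe : x = u ++ a :: b :: v) (hye : y = u ++ (q-1) :: v)
    (ha2 : a ≤ q-2) (hb2 : b ≤ q-2)
    (hxe' : x' = u' ++ a' :: b' :: v') (hye' : y = u' ++ (q-1) :: v')
    (ha2' : a' ≤ q-2) (hb2' : b' ≤ q-2)
    (hle : u.length ≤ u'.length) : x = x' := by
  rcases eq_or_lt_of_le hle with heq | hlt
  · -- same position
    obtain ⟨hu, hcons⟩ := List.append_inj (hye.symm.trans hye') heq
    rw [List.cons_eq_cons] at hcons
    obtain ⟨-, hv⟩ := hcons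
    subst hv
    -- syn identities
    have hs1 := syn_merge u a b (q-1) v
    rw [← hxe, ← hye] at hs1
    have hs2 := syn_merge u' a' b' (q-1) v
    rw [← hxe', ← hye'] at hs2
    rw [← hu] at hs2
    rw [← hab] at hs2
    -- syn x + (p+1)(q-1) = syn y + ((p+1)(a+b) + b + Σv) ; same for x' with b'
    have hkey : syn x + b' = syn x' + b := by
      generalize (u.length + 1) * (q-1) = C at hs1 hs2
      generalize (u.length + 1) * (a+b) = K at hs1 hs2
      omega
    have hbb' : b ≡ b' [MOD q*n] := by
      have h1 : syn x' + b ≡ syn x' + b' [MOD q*n] := by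
        rw [← hkey]
        exact hsyn.add_right b'
      exact Nat.ModEq.add_left_cancel' _ h1
    have hqn : q ≤ q * n := Nat.le_mul_of_pos_right q (by omega)
    have hb : b = b' := modeq_eq_of_lt hbb' (by omega) (by omega)
    have ha : a = a' := by omega
    simp [hxe, hxe', hu, hb, ha]
  · -- different positions: contradiction via pseq syndrome
    exfalso
    have hp1 := pseq_merge hq u v ha2 hb2
    rw [← hxe, ← hye] at hp1
    have hp2 := pseq_merge hq u' v' ha2' hb2'
    rw [← hxe', ← hye'] at hp2
    have hyv : v = y.drop (u.length + 1) := by rw [hye, drop_append_cons]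
    have hvd : v.drop (u'.length - u.length - 1) = (q-1) :: v' := by
      rw [hyv, List.drop_drop]
      rw [show u.length + 1 + (u'.length - u.length - 1) = u'.length by omega]
      rw [hye', List.drop_left]
    have hpsum : (pseq q v).sum
        = (pseq q (v.take (u'.length - u.length - 1))).sum + (1 + (pseq q v').sum) := by
      conv_lhs => rw [← List.take_append_drop (u'.length - u.length - 1) v, pseq_append,
        List.sum_append, hvd, pseq_cons, if_pos rfl, List.sum_cons]
    have htle : (pseq q (v.take (u'.length - u.length - 1))).sum ≤ u'.length - u.length - 1 := by
      have h1 := pseq_sum_le q (v.take (u'.length - u.length - 1))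
      have h2 : (v.take (u'.length - u.length - 1)).length ≤ u'.length - u.length - 1 := by
        simp [List.length_take]
      omega
    have hp'n : u'.length + 2 ≤ n := by
      rw [hxe'] at hlx'
      simp only [List.length_append, List.length_cons] at hlx'
      omega
    -- A = B + (p'-p) + t + 1
    have hAB : syn (pseq q x') ≤ syn (pseq q x) := by
      generalize (pseq q (v.take (u'.length - u.length - 1))).sum = t at hpsum htle
      omega
    have hdvd : (2*n - 3) ∣ (syn (pseq q x) - syn (pseq q x')) :=
      (Nat.modEq_iff_dvd' hAB).mp hsynP.symm
    have hD : syn (pseq q x) - syn (pseq q x')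
        = (u'.length - u.length) + (pseq q (v.take (u'.length - u.length - 1))).sum + 1 := by
      omega
    have hpos : 0 < syn (pseq q x) - syn (pseq q x') := by omega
    have := Nat.le_of_dvd hpos hdvd
    omega

lemma caseSS {q n : ℕ} {x x' y u v u' v' : List ℕ} {a b a' b' : ℕ}
    (hq : 3 ≤ q) (hn : 3 ≤ n)
    (hlx : x.length = n) (hlx' : x'.length = n)
    (hsyn : syn x ≡ syn x' [MOD q * n])
    (hsynP : syn (pseq q x) ≡ syn (pseq q x') [MOD 2 * n - 3])
    (hcnt : ∀ c, c ≤ q-2 → x.count c ≡ x'.count c [MOD 4])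
    (hxe : x = u ++ a :: b :: v) (hye : y = u ++ (q-1) :: v)
    (ha2 : a ≤ q-2) (hb2 : b ≤ q-2)
    (hxe' : x' = u' ++ a' :: b' :: v') (hye' : y = u' ++ (q-1) :: v')
    (ha2' : a' ≤ q-2) (hb2' : b' ≤ q-2) : x = x' := by
  have hab : a + b = a' + b' := countSS hq hcnt hxe hye hxe' hye' ha2 hb2 ha2' hb2'
  rcases le_total u.length u'.length with h | h
  · exact caseSS_aux hq hn hlx hlx' hsyn hsynP hab hxe hye ha2 hb2 hxe' hye' ha2' hb2' h
  · exact (caseSS_aux hq hn hlx' hlx hsyn.symm hsynP.symm hab.symm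
      hxe' hye' ha2' hb2' hxe hye ha2 hb2 h).symm

lemma caseDI {q : ℕ} {x x' y : List ℕ} {u v u' v' : List ℕ} {d a' b' : ℕ}
    (hq : 3 ≤ q)
    (hcnt : ∀ c, c ≤ q-2 → x.count c ≡ x'.count c [MOD 4])
    (hxe : x = u ++ d :: v) (hye : y = u ++ v)
    (hxe' : x' = u' ++ a' :: b' :: v') (hye' : y = u' ++ (a'+b') :: v')
    (h1a' : 1 ≤ a') (h1b' : 1 ≤ b') (hab' : a' + b' ≤ q-2) : False := by
  have k1 : x.count (a'+b') = y.count (a'+b') + (if d = a'+b' then 1 else 0) := by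
    rw [hxe, hye]; exact cnt_del u d v (a'+b')
  have k2 := cnt_merge u' a' b' (a'+b') v' (a'+b')
  rw [← hxe', ← hye'] at k2
  have k3 : x.count (a'+b') % 4 = x'.count (a'+b') % 4 := hcnt _ hab'
  split_ifs at k1 k2 <;> omega

lemma caseDS {q : ℕ} {x x' y : List ℕ} {u v u' v' : List ℕ} {d a' b' : ℕ}
    (hq : 3 ≤ q)
    (hcnt : ∀ c, c ≤ q-2 → x.count c ≡ x'.count c [MOD 4])
    (hxe : x = u ++ d :: v) (hye : y = u ++ v)
    (hxe' : x' = u' ++ a' :: b' :: v') (hye' : y = u' ++ (q-1) :: v')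
    (ha1' : 1 ≤ a') (ha2' : a' ≤ q-2) (hb1' : 1 ≤ b') (hb2' : b' ≤ q-2) : False := by
  have k1a : x.count a' = y.count a' + (if d = a' then 1 else 0) := by
    rw [hxe, hye]; exact cnt_del u d v a'
  have k1b : x.count b' = y.count b' + (if d = b' then 1 else 0) := by
    rw [hxe, hye]; exact cnt_del u d v b'
  have k2a := cnt_merge u' a' b' (q-1) v' a'
  rw [← hxe', ← hye'] at k2a
  have k2b := cnt_merge u' a' b' (q-1) v' b'
  rw [← hxe', ← hye'] at k2b
  have k3a : x.count a' % 4 = x'.count a' % 4 := hcnt _ ha2'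
  have k3b : x.count b' % 4 = x'.count b' % 4 := hcnt _ hb2'
  have hqa : ¬(q-1 = a') := by omega
  have hqb : ¬(q-1 = b') := by omega
  rw [if_neg hqa] at k2a
  rw [if_neg hqb] at k2b
  split_ifs at k1a k1b k2a k2b <;> omega

lemma caseIS {q : ℕ} {x x' y : List ℕ} {u v u' v' : List ℕ} {a b a' b' : ℕ}
    (hq : 3 ≤ q)
    (hcnt : ∀ c, c ≤ q-2 → x.count c ≡ x'.count c [MOD 4])
    (hxe : x = u ++ a :: b :: v) (hye : y = u ++ (a+b) :: v)
    (h1a : 1 ≤ a) (h1b : 1 ≤ b) (hab : a + b ≤ q-2)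
    (hxe' : x' = u' ++ a' :: b' :: v') (hye' : y = u' ++ (q-1) :: v') : False := by
  have k1 := cnt_merge u a b (a+b) v (a+b)
  rw [← hxe, ← hye] at k1
  have k2 := cnt_merge u' a' b' (q-1) v' (a+b)
  rw [← hxe', ← hye'] at k2
  have k3 : x.count (a+b) % 4 = x'.count (a+b) % 4 := hcnt _ hab
  have hq1 : ¬(q-1 = a+b) := by omega
  rw [if_neg hq1] at k2
  split_ifs at k1 k2 <;> omega

lemma absorb_cases {q : ℕ} (hq : 3 ≤ q) {x y : List ℕ} (hxq : ∀ e ∈ x, e < q)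
    (hlen : 1 ≤ x.length) (h : absorb1 q x y) :
    (∃ u d v, x = u ++ d :: v ∧ y = u ++ v) ∨
    (∃ u a b v, x = u ++ a :: b :: v ∧ y = u ++ (a+b) :: v ∧ 1 ≤ a ∧ 1 ≤ b ∧ a + b ≤ q-2) ∨
    (∃ u a b v, x = u ++ a :: b :: v ∧ y = u ++ (q-1) :: v ∧
      1 ≤ a ∧ a ≤ q-2 ∧ 1 ≤ b ∧ b ≤ q-2) := by
  rcases h with ⟨u, v, a, b, hx, hy⟩ | hy
  · have haq : a < q := hxq a (by rw [hx]; simp)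
    have hbq : b < q := hxq b (by rw [hx]; simp)
    by_cases ha0 : a = 0
    · left
      refine ⟨u, a, b :: v, hx, ?_⟩
      rw [hy, ha0]
      have : vplus q 0 b = b := by
        unfold vplus
        omega
      rw [this]
    · by_cases hb0 : b = 0
      · left
        refine ⟨u ++ [a], b, v, by rw [hx]; simp, ?_⟩
        rw [hy, hb0]
        have : vplus q a 0 = a := by
          unfold vplus
          omega
        rw [this]
        simp
      · by_cases haq1 : a = q-1
        · left
          refine ⟨u ++ [a], b, v, by rw [hx]; simp, ?_⟩
          rw [hy]
          have : vplus q a b = a := by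
            unfold vplus
            omega
          rw [this]
          simp
        · by_cases hbq1 : b = q-1
          · left
            refine ⟨u, a, b :: v, hx, ?_⟩
            rw [hy]
            have : vplus q a b = b := by
              unfold vplus
              omega
            rw [this]
          · by_cases hab : a + b ≤ q - 2
            · right; left
              refine ⟨u, a, b, v, hx, ?_, by omega, by omega, hab⟩
              rw [hy]
              have : vplus q a b = a + b := by
                unfold vplus
                omega
              rw [this]
            · right; right
              refine ⟨u, a, b, v, hx, ?_, by omega, by omega, by omega, by omega⟩
              rw [hy]
              have : vplus q a b = q - 1 := by
                unfold vplus
                omega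
              rw [this]
  · left
    have hne : x ≠ [] := by
      intro h0
      rw [h0] at hlen
      simp at hlen
    refine ⟨x.dropLast, x.getLast hne, [], ?_, by rw [hy]; simp⟩
    exact (List.dropLast_append_getLast hne).symm

lemma main_eq {q n : ℕ} (hq : 3 ≤ q) (hn : 3 ≤ n) {s : ℕ → ℕ} {t1 t2 d1 d2 : ℕ}
    {x x' y : List ℕ}
    (hx : memCodeC q n s t1 t2 d1 d2 x) (hx' : memCodeC q n s t1 t2 d1 d2 x')
    (h1 : absorb1 q x y) (h2 : absorb1 q x' y) : x = x' := by
  obtain ⟨hlx, hxq, hcx, hαx, hinvx, hsynx, hpx⟩ := hx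
  obtain ⟨hlx', hx'q, hcx', hαx', hinvx', hsynx', hpx'⟩ := hx'
  have hcnt : ∀ c, c ≤ q-2 → x.count c ≡ x'.count c [MOD 4] :=
    fun c hc => (hcx c hc).trans (hcx' c hc).symm
  have hsyn : syn x ≡ syn x' [MOD q*n] := hsynx.trans hsynx'.symm
  have hsynα : syn (alphaSeq x) ≡ syn (alphaSeq x') [MOD n] := hαx.trans hαx'.symm
  have hsynP : syn (pseq q x) ≡ syn (pseq q x') [MOD 2*n-3] := hpx.trans hpx'.symm
  rcases absorb_cases hq hxq (by omega) h1 with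
      ⟨u, d, v, hxe, hye⟩ | ⟨u, a, b, v, hxe, hye, h1a, h1b, hab⟩ |
      ⟨u, a, b, v, hxe, hye, h1a, ha2, h1b, hb2⟩ <;>
    rcases absorb_cases hq hx'q (by omega) h2 with
      ⟨u', d', v', hxe', hye'⟩ | ⟨u', a', b', v', hxe', hye', h1a', h1b', hab'⟩ |
      ⟨u', a', b', v', hxe', hye', h1a', ha2', h1b', hb2'⟩
  · exact caseDD hq hn hlx hxq hx'q hsynα hcnt hxe hye hxe' hye'
  · exact absurd (caseDI hq hcnt hxe hye hxe' hye' h1a' h1b' hab') id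
  · exact absurd (caseDS hq hcnt hxe hye hxe' hye' h1a' ha2' h1b' hb2') id
  · exact absurd (caseDI hq (fun c hc => (hcnt c hc).symm) hxe' hye' hxe hye h1a h1b hab) id
  · exact caseII hq hn hlx hlx' hxq hx'q hsyn hxe hye h1a h1b hxe' hye' h1a' h1b'
  · exact absurd (caseIS hq hcnt hxe hye h1a h1b hab hxe' hye') id
  · exact absurd (caseDS hq (fun c hc => (hcnt c hc).symm) hxe' hye' hxe hye h1a ha2 h1b hb2) id
  · exact absurd (caseIS hq (fun c hc => (hcnt c hc).symm) hxe' hye' h1a' h1b' hab' hxe hye) id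
  · exact caseSS hq hn hlx hlx' hsyn hsynP hcnt hxe hye ha2 hb2 hxe' hye' ha2' hb2'

end Stmt6Aux

/-- Theorem 1: for `q ≥ 3` and `n ≥ 3`, the code `C(n;s,t,d)` is a
single-absorption correcting code: distinct codewords have disjoint `1`-absorption balls. -/
theorem stmt6 (q n : ℕ) (hq : 3 ≤ q) (hn : 3 ≤ n)
    (s : ℕ → ℕ) (t1 t2 d1 d2 : ℕ)
    (x x' : List ℕ)
    (hx : memCodeC q n s t1 t2 d1 d2 x) (hx' : memCodeC q n s t1 t2 d1 d2 x')
    (hne : x ≠ x') :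
    ball1 q x ∩ ball1 q x' = ∅ := by
  rw [Set.eq_empty_iff_forall_notMem]
  rintro y ⟨hy1, hy2⟩
  exact hne (Stmt6Aux.main_eq hq hn hx hx' hy1 hy2)
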